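/- A right R-module M is max-projective if and only if M is N-subprojective for every right R-module N of finite composition length. -/
import Mathlib


universe u v

/-- A module `M` is *max-projective* if every homomorphism `M → R/I`, for `I` a
maximal right ideal of `R`, factors through the canonical projection `R → R/I`. -/
def MaxProjective (R : Type u) [Ring R] (M : Type v) [AddCommGroup M] [Module R M] : Prop :=
  ∀ I : Submodule R R, IsCoatom I → ∀ g : M →ₗ[R] R ⧸ I,
    ∃ h : M →ₗ[R] R, I.mkQ.comp h = g

/-- `M` is *`N`-subprojective* if every homomorphism `M → N` lifts along every
epimorphism onto `N`. -/
def Subprojective (R : Type u) [Ring R] (M : Type u) [AddCommGroup M] [Module R M]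
    (N : Type u) [AddCommGroup N] [Module R N] : Prop :=
  ∀ f : M →ₗ[R] N, ∀ (B : Type u) [AddCommGroup B] [Module R B] (g : B →ₗ[R] N),
    Function.Surjective g → ∃ h : M →ₗ[R] B, g.comp h = f

/-- Max-projective modules are subprojective relative to every simple module. -/
lemma MaxProjective.subprojective_simple {R : Type u} [Ring R]
    {M : Type u} [AddCommGroup M] [Module R M] (hM : MaxProjective R M)
    (T : Type u) [AddCommGroup T] [Module R T] [IsSimpleModule R T] :
    Subprojective R M T := by
  intro f B _ _ g hg
  have : Nontrivial T := IsSimpleModule.nontrivial R T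
  obtain ⟨t, ht⟩ := exists_ne (0 : T)
  let φ : R →ₗ[R] T := LinearMap.toSpanSingleton R T t
  have hφ : Function.Surjective φ := by
    rw [← LinearMap.range_eq_top, ← LinearMap.span_singleton_eq_range]
    rcases eq_bot_or_eq_top (Submodule.span R {t}) with h | h
    · exact absurd (h ▸ Submodule.mem_span_singleton_self t) (by simpa using ht)
    · exact h
  let e : (R ⧸ LinearMap.ker φ) ≃ₗ[R] T := φ.quotKerEquivOfSurjective hφ
  have hco : IsCoatom (LinearMap.ker φ) := by
    rw [← isSimpleModule_iff_isCoatom]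
    exact IsSimpleModule.congr e
  obtain ⟨h₁, hh₁⟩ := hM (LinearMap.ker φ) hco ((e.symm : T →ₗ[R] R ⧸ LinearMap.ker φ).comp f)
  -- lift e ∘ mkQ : R → T along g, using projectivity of R
  obtain ⟨k, hk⟩ := Module.projective_lifting_property g
    ((e : (R ⧸ LinearMap.ker φ) →ₗ[R] T).comp (LinearMap.ker φ).mkQ) hg
  refine ⟨k.comp h₁, ?_⟩
  ext m
  have := congrFun (congrArg DFunLike.coe hh₁) m
  have hk' := congrFun (congrArg DFunLike.coe hk) (h₁ m)
  simp only [LinearMap.comp_apply] at this hk' ⊢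
  rw [hk', this]
  simp

/-- `M` is max-projective iff `M` is `N`-subprojective for every module `N`
of finite composition length. -/
theorem maxProjective_iff_subprojective_finiteLength (R : Type u) [Ring R]
    (M : Type u) [AddCommGroup M] [Module R M] :
    MaxProjective R M ↔
      ∀ (N : Type u) [AddCommGroup N] [Module R N],
        IsFiniteLength R N → Subprojective R M N := by
  constructor
  · intro hM N _ _ hN
    induction hN with
    | of_subsingleton =>
        intro f B _ _ g hg
        exact ⟨0, by ext m; exact Subsingleton.elim _ _⟩
    | of_simple_quotient hfl ih =>
        rename_i N' _ _ S hS
        intro f B _ _ g hg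
        -- lift modulo S using subprojectivity w.r.t. the simple quotient
        obtain ⟨h₁, hh₁⟩ := hM.subprojective_simple (N' ⧸ S) (S.mkQ.comp f) B (S.mkQ.comp g)
          ((Submodule.mkQ_surjective S).comp hg)
        -- the difference lands in S
        have hd : ∀ m : M, f m - g (h₁ m) ∈ S := by
          intro m
          have := congrFun (congrArg DFunLike.coe hh₁) m
          simp only [LinearMap.comp_apply] at this
          rw [← Submodule.Quotient.mk_eq_zero, Submodule.Quotient.mk_sub]
          simp only [← Submodule.mkQ_apply, this, sub_self]
        let d : M →ₗ[R] S := (f - g.comp h₁).codRestrict S (by simpa using hd)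
        let B' := Submodule.comap g S
        let g' : B' →ₗ[R] S := g.restrict (fun x hx => hx)
        have hg' : Function.Surjective g' := by
          intro s
          obtain ⟨b, hb⟩ := hg (s : N')
          refine ⟨⟨b, ?_⟩, ?_⟩
          · show g b ∈ S
            rw [hb]; exact s.2
          · exact Subtype.ext hb
        obtain ⟨h₂, hh₂⟩ := ih d B' g' hg'
        refine ⟨h₁ + B'.subtype.comp h₂, ?_⟩
        ext m
        have h2 := congrFun (congrArg DFunLike.coe hh₂) m
        have h2' := congrArg (Subtype.val) h2
        simp only [LinearMap.comp_apply, LinearMap.restrict_apply, d,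
          LinearMap.codRestrict_apply, LinearMap.sub_apply, g'] at h2'
        simp only [LinearMap.comp_apply, LinearMap.add_apply, map_add,
          Submodule.subtype_apply]
        rw [h2']
        abel
  · intro h I hI gI
    have hs : IsSimpleModule R (R ⧸ I) := isSimpleModule_iff_isCoatom.mpr hI
    have hs' : IsSimpleModule R ((R ⧸ I) ⧸ (⊥ : Submodule R (R ⧸ I))) :=
      IsSimpleModule.congr (Submodule.quotEquivOfEqBot ⊥ rfl)
    have hfl : IsFiniteLength R (R ⧸ I) :=
      IsFiniteLength.of_simple_quotient
        (IsFiniteLength.of_subsingleton (M := (⊥ : Submodule R (R ⧸ I))))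
    exact h (R ⧸ I) hfl gI R I.mkQ (Submodule.mkQ_surjective I)
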